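/- arXiv:math/0703049 — 6 statements merged into one kernel-verified Lean document; each statement's English description precedes it below -/
import Mathlib

section
/- Let (R, m) be a finite commutative local ring with m² ≠ 0. If the zero-divisor graph Γ(R) contains no cycles (in particular, no triangles), then |R/m| = 2. -/
open SimpleGraph

/-- The zero-divisor graph of a commutative ring, defined on the whole ring
(elements that are not nonzero zero-divisors are isolated vertices). -/
def zdg (R : Type*) [CommRing R] : SimpleGraph R where
  Adj x y := x ≠ y ∧ x ≠ 0 ∧ y ≠ 0 ∧ x * y = 0
  symm := ⟨by
    rintro x y ⟨h1, h2, h3, h4⟩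
    exact ⟨fun e => h1 e.symm, h3, h2, by rwa [mul_comm]⟩⟩
  loopless := ⟨by rintro x ⟨h1, _⟩; exact h1 rfl⟩

/-- A triangle gives a cycle. -/
lemma triangle_not_acyclic {V : Type*} (G : SimpleGraph V) (a b c : V) (h1 : G.Adj a b)
    (h2 : G.Adj b c) (h3 : G.Adj c a) (nab : a ≠ b) (nbc : b ≠ c) (nca : c ≠ a) :
    ¬ G.IsAcyclic := by
  intro hac
  apply hac (Walk.cons h1 (Walk.cons h2 (Walk.cons h3 Walk.nil)))
  constructor
  · constructor
    · constructor
      simp [Walk.edges, Sym2.eq, Sym2.rel_iff']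
      tauto
    · simp
  · simp
    exact ⟨⟨nbc, fun e => nab e.symm⟩, nca⟩

/-- A finite field of cardinality at least 3 has an element other than 0 and 1. -/
lemma exists_ne_zero_ne_one {K : Type*} [Field K] [Finite K] (h : 3 ≤ Nat.card K) :
    ∃ x : K, x ≠ 0 ∧ x ≠ 1 := by
  by_contra hc
  push_neg at hc
  classical
  letI := Fintype.ofFinite K
  have hsub : (Finset.univ : Finset K) ⊆ {0, 1} := by
    intro x _
    rcases eq_or_ne x 0 with h0 | h0
    · simp [h0]
    · simp [hc x h0]
  have h2 : Fintype.card K ≤ 2 :=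
    le_trans (Finset.card_le_card hsub) ((Finset.card_insert_le _ _).trans (by simp))
  rw [Nat.card_eq_fintype_card] at h
  omega

/-- Let `(R, m)` be a finite local ring with `m² ≠ 0`. If `Γ(R)` contains no cycles,
then `|R/m| = 2`. -/
theorem stmt_8 (R : Type*) [CommRing R] [IsLocalRing R] [Finite R]
    (hm2 : (IsLocalRing.maximalIdeal R) ^ 2 ≠ ⊥)
    (hacyclic : (zdg R).IsAcyclic) :
    Nat.card (R ⧸ IsLocalRing.maximalIdeal R) = 2 := by
  set m := IsLocalRing.maximalIdeal R with hm
  by_contra hcard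
  -- the residue field is a nontrivial finite field
  haveI : m.IsMaximal := IsLocalRing.maximalIdeal.isMaximal R
  haveI : Finite (R ⧸ m) := Quotient.finite _
  letI : Field (R ⧸ m) := Ideal.Quotient.field m
  have hfield : 3 ≤ Nat.card (R ⧸ m) := by
    have h1 : 1 < Nat.card (R ⧸ m) := Finite.one_lt_card_iff_nontrivial.mpr inferInstance
    omega
  -- find a unit u with u ∉ 1 + m, u ∉ m
  obtain ⟨x, hx0, hx1⟩ := exists_ne_zero_ne_one (K := R ⧸ m) hfield
  obtain ⟨u, rfl⟩ := Ideal.Quotient.mk_surjective x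
  have hu : IsUnit u := by
    have : u ∉ m := fun hmem => hx0 ((Ideal.Quotient.eq_zero_iff_mem).mpr hmem)
    rwa [hm, IsLocalRing.mem_maximalIdeal, mem_nonunits_iff, not_not] at this
  have hu1 : IsUnit (u - 1) := by
    have : u - 1 ∉ m := by
      intro hmem
      apply hx1
      have := (Ideal.Quotient.eq_zero_iff_mem).mpr hmem
      rw [map_sub, map_one, sub_eq_zero] at this
      exact this
    rwa [hm, IsLocalRing.mem_maximalIdeal, mem_nonunits_iff, not_not] at this
  -- m is nilpotent
  have hnil : IsNilpotent m := by
    have := IsArtinianRing.isNilpotent_jacobson_bot (R := R)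
    rwa [IsLocalRing.jacobson_eq_maximalIdeal ⊥ bot_ne_top] at this
  have hex : ∃ n, m ^ n = ⊥ := hnil
  classical
  set n₀ := Nat.find hex with hn₀
  have hbot : m ^ n₀ = ⊥ := Nat.find_spec hex
  have hn3 : 3 ≤ n₀ := by
    by_contra hlt
    push_neg at hlt
    exact hm2 (le_bot_iff.mp (le_trans (Ideal.pow_le_pow_right (by omega)) hbot.le))
  set k := n₀ - 1 with hk
  have hk2 : 2 ≤ k := by omega
  have hksucc : k + 1 = n₀ := by omega
  have hknebot : m ^ k ≠ ⊥ := Nat.find_min hex (by omega)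
  -- pick z annihilating m
  obtain ⟨z, hzmem, hz0⟩ := Submodule.exists_mem_ne_zero_of_ne_bot hknebot
  have hzm2 : z ∈ m ^ 2 := Ideal.pow_le_pow_right hk2 hzmem
  have hzm : z ∈ m := Ideal.pow_le_self (by omega) hzmem
  have hzann : ∀ w ∈ m, z * w = 0 := by
    intro w hw
    have : z * w ∈ m ^ (k + 1) := by
      rw [pow_succ]
      exact Ideal.mul_mem_mul hzmem hw
    rw [hksucc, hbot] at this
    exact this
  -- pick w ∈ m \ m²
  have hmne : m ^ 2 ≠ m := by
    intro heq
    have hall : ∀ j, m ^ (j + 1) = m := by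
      intro j
      induction j with
      | zero => simp
      | succ j ih => rw [pow_succ, ih, ← pow_two, heq]
    have hmbot : m = ⊥ := by
      have h := hall (n₀ - 1)
      rw [show n₀ - 1 + 1 = n₀ by omega, hbot] at h
      exact h.symm
    exact hm2 (by rw [hmbot, pow_two, Ideal.mul_bot])
  have hlt : m ^ 2 < m := lt_of_le_of_ne (Ideal.pow_le_self two_ne_zero) hmne
  obtain ⟨w, hwm, hwm2⟩ := SetLike.exists_of_lt hlt
  have hw0 : w ≠ 0 := fun e => hwm2 (e ▸ (Submodule.zero_mem _))
  have huz2 : u * z ∈ m ^ 2 := Ideal.mul_mem_left _ u hzm2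
  have huz0 : u * z ≠ 0 := fun e => hz0 (hu.mul_right_eq_zero.mp e)
  have hzz : z * z = 0 := hzann z hzm
  have hzuz : z ≠ u * z := by
    intro e
    apply hz0
    have h0 : (u - 1) * z = 0 := by rw [sub_mul, one_mul, ← e, sub_self]
    exact hu1.mul_right_eq_zero.mp h0
  have h1 : (zdg R).Adj z (u * z) :=
    ⟨hzuz, hz0, huz0, by rw [show z * (u * z) = u * (z * z) by ring, hzz, mul_zero]⟩
  have h2 : (zdg R).Adj (u * z) w :=
    ⟨fun e => hwm2 (e ▸ huz2), huz0, hw0, by rw [mul_assoc, hzann w hwm, mul_zero]⟩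
  have h3 : (zdg R).Adj w z :=
    ⟨fun e => hwm2 (by rw [e]; exact hzm2), hw0, hz0, by rw [mul_comm]; exact hzann w hwm⟩
  exact triangle_not_acyclic (zdg R) z (u * z) w h1 h2 h3 hzuz h2.1 h3.1 hacyclic
end

section
/- Let R ≅ R_1 × R_2 × R_3 × R_4 be a product of four nonzero commutative rings (each with 1). Then K_{3,3} is a subgraph of the zero-divisor graph Γ(R). -/
open SimpleGraph Function

/-- Three pairwise distinct nonzero elements in a product of two nontrivial rings. -/
def trip (A B : Type*) [CommRing A] [CommRing B] : Fin 3 → A × B :=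
  ![(1, 0), (0, 1), (1, 1)]

lemma trip_ne_zero {A B : Type*} [CommRing A] [CommRing B] [Nontrivial A] [Nontrivial B]
    (i : Fin 3) : trip A B i ≠ 0 := by
  fin_cases i <;> simp [trip, Prod.ext_iff]

lemma trip_injective {A B : Type*} [CommRing A] [CommRing B] [Nontrivial A] [Nontrivial B] :
    Injective (trip A B) := by
  intro i j h
  fin_cases i <;> fin_cases j <;>
    simp_all [trip, Prod.ext_iff, eq_comm, (one_ne_zero : (1 : A) ≠ 0),
      (one_ne_zero : (1 : B) ≠ 0)]

/-- If `R` is a product of four nonzero commutative rings, then `K_{3,3}` is a subgraph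
of `Γ(R)`. -/
theorem stmt_10 (R R₁ R₂ R₃ R₄ : Type*) [CommRing R] [CommRing R₁] [CommRing R₂]
    [CommRing R₃] [CommRing R₄] [Nontrivial R₁] [Nontrivial R₂] [Nontrivial R₃]
    [Nontrivial R₄] (e : R ≃+* R₁ × R₂ × R₃ × R₄) :
    ∃ f : completeBipartiteGraph (Fin 3) (Fin 3) →g zdg R, Injective f := by
  classical
  set g : Fin 3 ⊕ Fin 3 → R₁ × R₂ × R₃ × R₄ :=
    Sum.elim (fun i => ((trip R₁ R₂ i).1, (trip R₁ R₂ i).2, 0, 0))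
      (fun j => (0, 0, (trip R₃ R₄ j).1, (trip R₃ R₄ j).2)) with hg
  have hgL : ∀ i, g (Sum.inl i) ≠ 0 := by
    intro i h
    refine trip_ne_zero (A := R₁) (B := R₂) i ?_
    simp only [hg, Sum.elim_inl, Prod.mk_eq_zero] at h
    exact Prod.ext h.1 h.2.1
  have hgR : ∀ j, g (Sum.inr j) ≠ 0 := by
    intro j h
    refine trip_ne_zero (A := R₃) (B := R₄) j ?_
    simp only [hg, Sum.elim_inr, Prod.mk_eq_zero, true_and] at h
    exact Prod.ext h.1 h.2
  have hgmul : ∀ i j, g (Sum.inl i) * g (Sum.inr j) = 0 := by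
    intro i j
    simp [hg, Prod.ext_iff, Prod.mk_mul_mk]
  have hgne : ∀ i j, g (Sum.inl i) ≠ g (Sum.inr j) := by
    intro i j h
    refine trip_ne_zero (A := R₁) (B := R₂) i ?_
    simp only [hg, Sum.elim_inl, Sum.elim_inr, Prod.mk.injEq] at h
    exact Prod.ext h.1 h.2.1
  have hginj : Injective g := by
    rintro (i | i) (j | j) h
    · simp only [hg, Sum.elim_inl, Prod.mk.injEq, and_true] at h
      exact congrArg Sum.inl (trip_injective (Prod.ext h.1 (by simpa using h.2)))
    · exact absurd h (hgne i j)
    · exact absurd h.symm (hgne j i)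
    · simp only [hg, Sum.elim_inr, Prod.mk.injEq, true_and] at h
      exact congrArg Sum.inr (trip_injective (Prod.ext h.1 h.2))
  refine ⟨⟨fun s => e.symm (g s), ?_⟩, fun a b hab => hginj (e.symm.injective hab)⟩
  rintro (i | i) (j | j) hadj
  · simp at hadj
  · refine ⟨fun h => hgne i j (e.symm.injective h), ?_, ?_, ?_⟩
    · exact fun h => hgL i ((map_eq_zero_iff _ e.symm.injective).mp h)
    · exact fun h => hgR j ((map_eq_zero_iff _ e.symm.injective).mp h)
    · rw [← map_mul, hgmul, map_zero]
  · refine ⟨fun h => hgne j i (e.symm.injective h.symm), ?_, ?_, ?_⟩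
    · exact fun h => hgR i ((map_eq_zero_iff _ e.symm.injective).mp h)
    · exact fun h => hgL j ((map_eq_zero_iff _ e.symm.injective).mp h)
    · rw [← map_mul, mul_comm, hgmul, map_zero]
  · simp at hadj
end

section
/- Let R be a finite commutative ring and I an ideal with R/I ≅ ℤ/2 × ℤ/2 and |I| = t. Then Γ_I(R) is isomorphic to the complete bipartite graph K_{t,t}. -/
open SimpleGraph

/-- The vertex set of the ideal-based zero-divisor graph `Γ_I(R)`. -/
def zdvSet (R : Type*) [CommRing R] (I : Ideal R) : Set R :=
  {x | x ∉ I ∧ ∃ y, y ∉ I ∧ x * y ∈ I}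

/-- The ideal-based zero-divisor graph `Γ_I(R)` on its vertex set. -/
def GammaI (R : Type*) [CommRing R] (I : Ideal R) : SimpleGraph (zdvSet R I) where
  Adj x y := x ≠ y ∧ (x : R) * y ∈ I
  symm := by
    constructor
    rintro x y ⟨h1, h2⟩
    exact ⟨fun e => h1 e.symm, by rwa [mul_comm]⟩
  loopless := by constructor; rintro x ⟨h1, _⟩; exact h1 rfl

/-- If `R` is a finite commutative ring and `I` is an ideal with `R/I ≅ ℤ/2 × ℤ/2` and
`|I| = t`, then `Γ_I(R) ≅ K_{t,t}`. -/
theorem stmt_12 (R : Type*) [CommRing R] [Finite R] (I : Ideal R)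
    (e : (R ⧸ I) ≃+* ZMod 2 × ZMod 2) (t : ℕ) (ht : Nat.card I = t) :
    Nonempty (GammaI R I ≃g completeBipartiteGraph (Fin t) (Fin t)) := by
  classical
  set f : R →+* ZMod 2 × ZMod 2 := e.toRingHom.comp (Ideal.Quotient.mk I) with hfdef
  have hmem : ∀ x : R, x ∈ I ↔ f x = 0 := by
    intro x
    simp [hfdef, Ideal.Quotient.eq_zero_iff_mem]
  have hsurj : Function.Surjective f := by
    intro a
    obtain ⟨q, hq⟩ := e.surjective a
    obtain ⟨x, hx⟩ := Ideal.Quotient.mk_surjective q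
    exact ⟨x, by simp [hfdef, hx, hq]⟩
  have hfour : ∀ a : ZMod 2 × ZMod 2, a = 0 ∨ a = (1,0) ∨ a = (0,1) ∨ a = 1 := by decide
  have hz : ∀ x : R, x ∈ zdvSet R I ↔ f x = (1,0) ∨ f x = (0,1) := by
    intro x
    constructor
    · rintro ⟨hxI, y, hyI, hxy⟩
      have hx0 : f x ≠ 0 := fun h => hxI ((hmem x).mpr h)
      have hy0 : f y ≠ 0 := fun h => hyI ((hmem y).mpr h)
      have hprod : f x * f y = 0 := by rw [← map_mul]; exact (hmem _).mp hxy
      rcases hfour (f x) with h | h | h | h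
      · exact absurd h hx0
      · exact Or.inl h
      · exact Or.inr h
      · rw [h, one_mul] at hprod; exact absurd hprod hy0
    · intro h
      have hx0 : f x ≠ 0 := by rcases h with h | h <;> rw [h] <;> decide
      refine ⟨fun hxI => hx0 ((hmem x).mp hxI), ?_⟩
      rcases h with h | h
      · obtain ⟨y, hy⟩ := hsurj (0,1)
        refine ⟨y, fun hyI => ?_, (hmem _).mpr ?_⟩
        · rw [(hmem y).mp hyI] at hy; exact absurd hy (by decide)
        · rw [map_mul, h, hy]; decide
      · obtain ⟨y, hy⟩ := hsurj (1,0)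
        refine ⟨y, fun hyI => ?_, (hmem _).mpr ?_⟩
        · rw [(hmem y).mp hyI] at hy; exact absurd hy (by decide)
        · rw [map_mul, h, hy]; decide
  have fibcard : ∀ (x₀ : R), Nat.card {x : R // f x = f x₀} = t := by
    intro x₀
    rw [← ht]
    refine Nat.card_congr ⟨fun x => ⟨x.1 - x₀, (hmem _).mpr (by rw [map_sub, x.2, sub_self])⟩,
      fun i => ⟨x₀ + i.1, by rw [map_add, (hmem _).mp i.2, add_zero]⟩,
      fun x => Subtype.ext (by simp), fun i => Subtype.ext (by simp)⟩
  obtain ⟨x₁, hx₁⟩ := hsurj (1,0)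
  obtain ⟨x₂, hx₂⟩ := hsurj (0,1)
  have c₁ : Nat.card {x : R // f x = (1,0)} = t := by have := fibcard x₁; rwa [hx₁] at this
  have c₂ : Nat.card {x : R // f x = (0,1)} = t := by have := fibcard x₂; rwa [hx₂] at this
  let q₁ : {x : R // f x = (1,0)} ≃ Fin t := Finite.equivFinOfCardEq c₁
  let q₂ : {x : R // f x = (0,1)} ≃ Fin t := Finite.equivFinOfCardEq c₂
  let F : zdvSet R I → Fin t ⊕ Fin t := fun x =>
    if h : f x.1 = (1,0) then Sum.inl (q₁ ⟨x.1, h⟩)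
    else Sum.inr (q₂ ⟨x.1, ((hz x.1).mp x.2).resolve_left h⟩)
  let G : Fin t ⊕ Fin t → zdvSet R I := fun s =>
    Sum.elim (fun i => ⟨(q₁.symm i).1, (hz _).mpr (Or.inl (q₁.symm i).2)⟩)
      (fun i => ⟨(q₂.symm i).1, (hz _).mpr (Or.inr (q₂.symm i).2)⟩) s
  have hGF : Function.LeftInverse G F := by
    intro x
    by_cases h : f x.1 = (1,0)
    · simp only [F, G, dif_pos h, Sum.elim_inl]
      exact Subtype.ext (by simp)
    · simp only [F, G, dif_neg h, Sum.elim_inr]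
      exact Subtype.ext (by simp)
  have hFG : Function.RightInverse G F := by
    rintro (i | i)
    · have h : f (q₁.symm i).1 = (1,0) := (q₁.symm i).2
      simp only [F, G, Sum.elim_inl, dif_pos h]
      congr 1
      rw [Subtype.eta]
      exact q₁.apply_symm_apply i
    · have h : f (q₂.symm i).1 = (0,1) := (q₂.symm i).2
      have h' : ¬ f (q₂.symm i).1 = (1,0) := by rw [h]; decide
      simp only [F, G, Sum.elim_inr, dif_neg h']
      congr 1
      rw [Subtype.eta]
      exact q₂.apply_symm_apply i
  have adj_iff : ∀ a b : zdvSet R I, (GammaI R I).Adj a b ↔ f a.1 ≠ f b.1 := by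
    intro a b
    have ha := (hz a.1).mp a.2
    have hb := (hz b.1).mp b.2
    constructor
    · rintro ⟨hne, hab⟩ heq
      have : f a.1 * f b.1 = 0 := by rw [← map_mul]; exact (hmem _).mp hab
      rw [heq] at this
      rcases hb with h | h <;> rw [h] at this <;> exact absurd this (by decide)
    · intro hne
      refine ⟨fun h => hne (by rw [h]), (hmem _).mpr ?_⟩
      rw [map_mul]
      rcases ha with h | h <;> rcases hb with h' | h' <;> rw [h, h']
      · exact absurd (h.trans h'.symm) hne
      · decide
      · decide
      · exact absurd (h.trans h'.symm) hne
  refine ⟨⟨⟨F, G, hGF, hFG⟩, ?_⟩⟩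
  intro a b
  show (completeBipartiteGraph (Fin t) (Fin t)).Adj (F a) (F b) ↔ (GammaI R I).Adj a b
  rw [adj_iff]
  by_cases h1 : f a.1 = (1,0) <;> by_cases h2 : f b.1 = (1,0)
  · have heq : f a.1 = f b.1 := h1.trans h2.symm
    simp [F, dif_pos h1, dif_pos h2, completeBipartiteGraph, heq]
  · have hb := ((hz b.1).mp b.2).resolve_left h2
    have hne : f a.1 ≠ f b.1 := by rw [h1, hb]; decide
    simp [F, dif_pos h1, dif_neg h2, completeBipartiteGraph, hne]
  · have ha := ((hz a.1).mp a.2).resolve_left h1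
    have hne : f a.1 ≠ f b.1 := by rw [ha, h2]; decide
    simp [F, dif_neg h1, dif_pos h2, completeBipartiteGraph, hne]
  · have ha := ((hz a.1).mp a.2).resolve_left h1
    have hb := ((hz b.1).mp b.2).resolve_left h2
    have heq : f a.1 = f b.1 := ha.trans hb.symm
    simp [F, dif_neg h1, dif_neg h2, completeBipartiteGraph, heq]
end

section
/- Let R be a finite commutative ring and I an ideal with R/I ≅ ℤ/4 (or R/I ≅ (ℤ/2)[x]/(x²)) and |I| = t. Then Γ_I(R) is isomorphic to the complete graph K_t. -/
open SimpleGraph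

/-- A ring has a unique nonzero zero-divisor `u`, and it squares to zero. -/
def Good (S : Type*) [CommRing S] : Prop :=
  ∃ u : S, u ≠ 0 ∧ u * u = 0 ∧
    ∀ a : S, a ≠ 0 → (∃ b, b ≠ 0 ∧ a * b = 0) → a = u

lemma good_of_iso {S S' : Type*} [CommRing S] [CommRing S'] (f : S ≃+* S')
    (h : Good S') : Good S := by
  obtain ⟨u, hu0, hu2, huniq⟩ := h
  refine ⟨f.symm u, ?_, ?_, ?_⟩
  · intro h0
    apply hu0
    have := congrArg f h0
    simpa using this
  · have : f (f.symm u * f.symm u) = 0 := by simp [map_mul, hu2]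
    exact (map_eq_zero_iff f f.injective).mp this
  · rintro a ha ⟨b, hb, hab⟩
    have h1 : f a = u := by
      refine huniq (f a) ((map_ne_zero_iff f f.injective).mpr ha)
        ⟨f b, (map_ne_zero_iff f f.injective).mpr hb, ?_⟩
      rw [← map_mul, hab, map_zero]
    have := congrArg f.symm h1
    simpa using this

lemma good_zmod4 : Good (ZMod 4) := by
  refine ⟨2, by decide, by decide, ?_⟩
  decide

lemma good_poly :
    Good (Polynomial (ZMod 2) ⧸
      Ideal.span {(Polynomial.X : Polynomial (ZMod 2)) ^ 2}) := by
  set J : Ideal (Polynomial (ZMod 2)) :=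
    Ideal.span {(Polynomial.X : Polynomial (ZMod 2)) ^ 2} with hJ
  set mk := Ideal.Quotient.mk J with hmk
  have hX2 : mk (Polynomial.X ^ 2) = 0 := by
    rw [Ideal.Quotient.eq_zero_iff_mem]
    exact Ideal.subset_span rfl
  have hu0 : mk Polynomial.X ≠ 0 := by
    rw [Ne, Ideal.Quotient.eq_zero_iff_mem, hJ, Ideal.mem_span_singleton]
    intro hdvd
    have := Polynomial.degree_le_of_dvd hdvd Polynomial.X_ne_zero
    rw [Polynomial.degree_X_pow, Polynomial.degree_X] at this
    norm_num at this
  have hu2 : mk Polynomial.X * mk Polynomial.X = 0 := by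
    rw [← map_mul, ← sq, hX2]
  -- every element is mk of a polynomial of degree ≤ 1
  have key : ∀ a : Polynomial (ZMod 2) ⧸ J,
      ∃ c0 c1 : ZMod 2, a = Polynomial.C c0 * 1 + Polynomial.C c1 * mk Polynomial.X := by
    intro a
    obtain ⟨p, rfl⟩ := Ideal.Quotient.mk_surjective a
    have hmono : (Polynomial.X ^ 2 : Polynomial (ZMod 2)).Monic := Polynomial.monic_X_pow 2
    have hdecomp := Polynomial.modByMonic_add_div p (Polynomial.X ^ 2)
    set r := p %ₘ (Polynomial.X ^ 2) with hr
    have hmkp : mk p = mk r := by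
      conv_lhs => rw [← hdecomp]
      rw [map_add, map_mul, hX2, zero_mul, add_zero]
    have hdeg : r.degree < (Polynomial.X ^ 2 : Polynomial (ZMod 2)).degree :=
      Polynomial.degree_modByMonic_lt p hmono
    rw [Polynomial.degree_X_pow] at hdeg
    have hdeg1 : r.degree ≤ 1 := by
      by_cases hr0 : r = 0
      · simp [hr0]
      · rw [Polynomial.degree_eq_natDegree hr0] at hdeg ⊢
        exact_mod_cast Nat.lt_succ_iff.mp (by exact_mod_cast hdeg)
    have := Polynomial.eq_X_add_C_of_degree_le_one hdeg1
    refine ⟨r.coeff 0, r.coeff 1, ?_⟩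
    rw [hmkp]
    conv_lhs => rw [this]
    rw [map_add, map_mul]
    ring
  refine ⟨mk Polynomial.X, hu0, hu2, ?_⟩
  rintro a ha ⟨b, hb, hab⟩
  obtain ⟨c0, c1, rfl⟩ := key a
  have htwo : ∀ c : ZMod 2, c = 0 ∨ c = 1 := by decide
  rcases htwo c0 with rfl | rfl
  · rcases htwo c1 with rfl | rfl
    · exfalso; apply ha; simp
    · simp
  · -- c0 = 1 : a is a unit, contradiction
    exfalso
    set u := mk Polynomial.X
    set a := Polynomial.C (1 : ZMod 2) * 1 + Polynomial.C c1 * u with hadef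
    have h2 : (2 : Polynomial (ZMod 2) ⧸ J) = 0 := by
      rw [← map_ofNat (Ideal.Quotient.mk J) 2,
        ← map_ofNat (Polynomial.C (R := ZMod 2)) 2,
        show (2 : ZMod 2) = 0 by decide, map_zero, map_zero]
    have haa : a * a = 1 := by
      rcases htwo c1 with rfl | rfl
      · simp [hadef]
      · rw [hadef]
        simp only [map_one, one_mul, mul_one]
        linear_combination u * h2 + hu2
    apply hb
    calc b = (a * a) * b := by rw [haa, one_mul]
    _ = a * (a * b) := by ring
    _ = 0 := by rw [hab, mul_zero]

/-- If `R` is a finite commutative ring and `I` an ideal with `R/I ≅ ℤ/4` or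
`R/I ≅ (ℤ/2)[x]/(x²)`, and `|I| = t`, then `Γ_I(R) ≅ K_t`. -/
theorem stmt_14 (R : Type*) [CommRing R] [Finite R] (I : Ideal R)
    (e : Nonempty ((R ⧸ I) ≃+* ZMod 4) ∨
      Nonempty ((R ⧸ I) ≃+*
        (Polynomial (ZMod 2) ⧸ Ideal.span {(Polynomial.X : Polynomial (ZMod 2)) ^ 2})))
    (t : ℕ) (ht : Nat.card I = t) :
    Nonempty (GammaI R I ≃g completeGraph (Fin t)) := by
  have hgood : Good (R ⧸ I) := by
    rcases e with ⟨⟨f⟩⟩ | ⟨⟨f⟩⟩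
    · exact good_of_iso f good_zmod4
    · exact good_of_iso f good_poly
  obtain ⟨u, hu0, hu2, huniq⟩ := hgood
  set q := Ideal.Quotient.mk I with hq
  -- characterize the vertex set
  have hset : ∀ x : R, x ∈ zdvSet R I ↔ q x = u := by
    intro x
    constructor
    · rintro ⟨hx, y, hy, hxy⟩
      refine huniq (q x) ?_ ⟨q y, ?_, ?_⟩
      · rwa [Ne, Ideal.Quotient.eq_zero_iff_mem]
      · rwa [Ne, Ideal.Quotient.eq_zero_iff_mem]
      · rwa [← map_mul, Ideal.Quotient.eq_zero_iff_mem]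
    · intro hx
      obtain ⟨y, hy⟩ := Ideal.Quotient.mk_surjective u
      refine ⟨?_, y, ?_, ?_⟩
      · rw [← Ideal.Quotient.eq_zero_iff_mem]
        intro h0; exact hu0 (by rw [← hx]; exact h0)
      · rw [← Ideal.Quotient.eq_zero_iff_mem]
        intro h0; exact hu0 (by rw [← hy, h0])
      · rw [← Ideal.Quotient.eq_zero_iff_mem, map_mul, hx, hy, hu2]
  -- all vertices are pairwise adjacent
  have hadj : ∀ x y : zdvSet R I, (x : R) * y ∈ I := by
    rintro ⟨x, hx⟩ ⟨y, hy⟩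
    rw [hset] at hx hy
    rw [← Ideal.Quotient.eq_zero_iff_mem, map_mul, hx, hy, hu2]
  -- cardinality: the vertex set is a coset of I
  obtain ⟨x0, hx0⟩ := Ideal.Quotient.mk_surjective u
  have hx0' : x0 ∈ zdvSet R I := (hset x0).mpr hx0
  have ecoset : I ≃ zdvSet R I :=
    { toFun := fun i => ⟨x0 + i, by
        rw [hset, map_add, hx0, Ideal.Quotient.eq_zero_iff_mem.mpr i.2, add_zero]⟩
      invFun := fun x => ⟨(x : R) - x0, by
        rw [← Ideal.Quotient.eq_zero_iff_mem, map_sub, (hset _).mp x.2, hx0, sub_self]⟩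
      left_inv := fun i => by ext; simp
      right_inv := fun x => by ext; simp }
  have hcard : Nat.card (zdvSet R I) = t := by
    rw [← Nat.card_congr ecoset, ht]
  have e2 : zdvSet R I ≃ Fin t := Finite.equivFinOfCardEq hcard
  refine ⟨⟨e2, ?_⟩⟩
  intro x y
  simp only [completeGraph_eq_top, top_adj, ne_eq, EmbeddingLike.apply_eq_iff_eq]
  show ¬ x = y ↔ (x ≠ y ∧ (x : R) * y ∈ I)
  exact ⟨fun h => ⟨h, hadj x y⟩, fun h => h.1⟩
end

section
/- Let R be a finite commutative ring and I an ideal with R/I ≅ ℤ/9 and |I| = t. Then Γ_I(R) is isomorphic to the complete graph K_{2t}. -/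
open SimpleGraph

/-- If `R` is a finite commutative ring and `I` is an ideal with `R/I ≅ ℤ/9` and
`|I| = t`, then `Γ_I(R) ≅ K_{2t}`. -/
theorem stmt_15 (R : Type*) [CommRing R] [Finite R] (I : Ideal R)
    (e : (R ⧸ I) ≃+* ZMod 9) (t : ℕ) (ht : Nat.card I = t) :
    Nonempty (GammaI R I ≃g completeGraph (Fin (2 * t))) := by
  classical
  set π : R →+* ZMod 9 := (e : (R ⧸ I) →+* ZMod 9).comp (Ideal.Quotient.mk I) with hπ
  have hsurj : Function.Surjective π := by
    exact e.surjective.comp Ideal.Quotient.mk_surjective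
  have hmem : ∀ x : R, x ∈ I ↔ π x = 0 := by
    intro x
    have : π x = 0 ↔ Ideal.Quotient.mk I x = 0 := by
      simp [hπ, EmbeddingLike.map_eq_zero_iff]
    rw [this, Ideal.Quotient.eq_zero_iff_mem]
  -- characterize the vertex set
  have hchar : ∀ x : R, x ∈ zdvSet R I ↔ (π x = 3 ∨ π x = 6) := by
    intro x
    constructor
    · rintro ⟨hx, y, hy, hxy⟩
      have hx' : π x ≠ 0 := fun h => hx ((hmem x).2 h)
      have hy' : π y ≠ 0 := fun h => hy ((hmem y).2 h)
      have hxy' : π x * π y = 0 := by rw [← map_mul]; exact (hmem _).1 hxy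
      revert hx' hy' hxy'
      generalize π x = a; generalize π y = b
      revert a b; decide
    · intro h
      obtain ⟨y, hy⟩ := hsurj 3
      have hx : x ∉ I := by
        rw [hmem]; rcases h with h | h <;> rw [h] <;> decide
      refine ⟨hx, y, ?_, ?_⟩
      · rw [hmem, hy]; decide
      · rw [hmem, map_mul, hy]; rcases h with h | h <;> rw [h] <;> decide
  -- the graph is complete
  have hcomp : ∀ x y : zdvSet R I, x ≠ y → (x : R) * y ∈ I := by
    rintro ⟨x, hx⟩ ⟨y, hy⟩ _
    rw [hmem, map_mul]
    rw [hchar] at hx hy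
    rcases hx with h1 | h1 <;> rcases hy with h2 | h2 <;> rw [h1, h2] <;> decide
  -- cardinality: build an equiv I ⊕ I ≃ zdvSet
  obtain ⟨x₃, hx₃⟩ := hsurj 3
  obtain ⟨x₆, hx₆⟩ := hsurj 6
  have hsub : ∀ (x₀ x : R), π x₀ = π x → x - x₀ ∈ I := by
    intro x₀ x h
    rw [hmem, map_sub, h, sub_self]
  let f : (I ⊕ I) → zdvSet R I := fun z =>
    match z with
    | Sum.inl i => ⟨x₃ + i, (hchar _).2 (Or.inl (by
        rw [map_add, hx₃, (hmem _).1 i.2, add_zero]))⟩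
    | Sum.inr i => ⟨x₆ + i, (hchar _).2 (Or.inr (by
        rw [map_add, hx₆, (hmem _).1 i.2, add_zero]))⟩
  have hbij : Function.Bijective f := by
    constructor
    · rintro (⟨i, hi⟩ | ⟨i, hi⟩) (⟨j, hj⟩ | ⟨j, hj⟩) h <;>
        simp only [f, Subtype.mk.injEq] at h
      · exact congrArg Sum.inl (Subtype.ext (add_left_cancel h))
      · exfalso
        have : π (x₃ + i) = π (x₆ + j) := by rw [h]
        rw [map_add, map_add, hx₃, hx₆, (hmem _).1 hi, (hmem _).1 hj] at this
        simp at this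
        exact absurd this (by decide)
      · exfalso
        have : π (x₆ + i) = π (x₃ + j) := by rw [h]
        rw [map_add, map_add, hx₃, hx₆, (hmem _).1 hi, (hmem _).1 hj] at this
        simp at this
        exact absurd this (by decide)
      · exact congrArg Sum.inr (Subtype.ext (add_left_cancel h))
    · rintro ⟨x, hx⟩
      rcases (hchar x).1 hx with h | h
      · refine ⟨Sum.inl ⟨x - x₃, hsub x₃ x (by rw [hx₃, h])⟩, ?_⟩
        simp only [f, Subtype.mk.injEq]
        ring
      · refine ⟨Sum.inr ⟨x - x₆, hsub x₆ x (by rw [hx₆, h])⟩, ?_⟩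
        simp only [f, Subtype.mk.injEq]
        ring
  have hcard : Nat.card (zdvSet R I) = 2 * t := by
    rw [← Nat.card_eq_of_bijective f hbij, Nat.card_sum, ht]
    ring
  obtain ⟨g⟩ : Nonempty (zdvSet R I ≃ Fin (2 * t)) :=
    ⟨Finite.equivFinOfCardEq hcard⟩
  refine ⟨⟨g, ?_⟩⟩
  intro a b
  simp only [completeGraph, GammaI, ne_eq, EmbeddingLike.apply_eq_iff_eq, top_adj]
  constructor
  · intro h
    exact ⟨h, hcomp a b h⟩
  · rintro ⟨h, _⟩; exact h
end

section
/- Let I be a radical ideal of a commutative ring R with minimal primary decomposition I = p_1 ∩ ... ∩ p_n where each p_i is a prime ideal and the decomposition is irredundant (no p_i contains the intersection of the others). Then the clique number of Γ_I(R) equals n, provided n ≥ 2. -/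
open SimpleGraph

/-- If `I` is a radical ideal of `R` with an irredundant decomposition
`I = p₁ ∩ ⋯ ∩ pₙ` into prime ideals (`n ≥ 2`), then the clique number of `Γ_I(R)`
is `n`. -/
theorem stmt_17 (R : Type*) [CommRing R] (I : Ideal R) (hrad : I.radical = I)
    (n : ℕ) (hn : 2 ≤ n) (p : Fin n → Ideal R)
    (hprime : ∀ i, (p i).IsPrime)
    (hdec : I = ⨅ i, p i)
    (hirr : ∀ i : Fin n, ¬ (⨅ j : {j : Fin n // j ≠ i}, p j) ≤ p i) :
    (GammaI R I).cliqueNum = n := by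
  classical
  have hx : ∀ i : Fin n, ∃ x : R, (∀ j : Fin n, j ≠ i → x ∈ p j) ∧ x ∉ p i := by
    intro i
    obtain ⟨x, hx1, hx2⟩ := SetLike.not_le_iff_exists.mp (hirr i)
    exact ⟨x, fun j hj => (Submodule.mem_iInf _).mp hx1 ⟨j, hj⟩, hx2⟩
  choose x hxmem hxnot using hx
  have hIle : ∀ i, I ≤ p i := fun i => hdec ▸ iInf_le p i
  have hxnotI : ∀ i, x i ∉ I := fun i h => hxnot i (hIle i h)
  have hmul : ∀ i j : Fin n, i ≠ j → x i * x j ∈ I := by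
    intro i j hij
    rw [hdec, Submodule.mem_iInf]
    intro k
    by_cases hk : k = i
    · subst hk
      exact Ideal.mul_mem_left _ _ (hxmem j k hij)
    · exact Ideal.mul_mem_right _ _ (hxmem i k hk)
  have hvert : ∀ i, x i ∈ zdvSet R I := by
    intro i
    refine ⟨hxnotI i, ?_⟩
    obtain ⟨j, hj⟩ : ∃ j : Fin n, j ≠ i := by
      rcases eq_or_ne (i : ℕ) 0 with h0 | h0
      · exact ⟨⟨1, by omega⟩, fun h => by simp [Fin.ext_iff, h0] at h⟩
      · exact ⟨⟨0, by omega⟩, fun h => by simp [Fin.ext_iff, h0] at h; omega⟩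
    exact ⟨x j, hxnotI j, hmul i j (Ne.symm hj)⟩
  set v : Fin n → zdvSet R I := fun i => ⟨x i, hvert i⟩ with hv
  have hvinj : Function.Injective v := by
    intro i j hij
    by_contra hne
    apply hxnot i
    have hx' : x i = x j := congrArg Subtype.val hij
    rw [hx']
    exact hxmem j i hne
  -- upper bound
  have key : ∀ a : zdvSet R I, ∃ i, (a : R) ∉ p i := by
    intro a
    by_contra h
    push_neg at h
    exact a.2.1 (le_of_eq hdec.symm ((Submodule.mem_iInf _).mpr h))
  choose f hf using key
  have hub : ∀ m ∈ {m | ∃ s, (GammaI R I).IsNClique m s}, m ≤ n := by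
    rintro m ⟨s, hs⟩
    by_contra hlt
    push_neg at hlt
    obtain ⟨a, ha, b, hb, hab, hfab⟩ :=
      Finset.exists_ne_map_eq_of_card_lt_of_maps_to
        (t := (Finset.univ : Finset (Fin n)))
        (by rw [hs.2]; simpa using hlt) (fun a _ => Finset.mem_univ (f a))
    have hadj := hs.1 ha hb hab
    have hPI : (a : R) * b ∈ p (f a) := hIle (f a) hadj.2
    rcases (hprime (f a)).mem_or_mem hPI with h | h
    · exact hf a h
    · rw [hfab] at h
      exact hf b h
  -- lower bound clique
  have hclique : (GammaI R I).IsNClique n (Finset.univ.map ⟨v, hvinj⟩) := by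
    constructor
    · intro a ha b hb hab
      simp only [Finset.coe_map, Set.mem_image, Finset.coe_univ, Set.image_univ,
        Set.mem_range, Function.Embedding.coeFn_mk] at ha hb
      obtain ⟨i, rfl⟩ := ha
      obtain ⟨j, rfl⟩ := hb
      have hij : i ≠ j := fun h => hab (by rw [h])
      exact ⟨hab, hmul i j hij⟩
    · simp
  rw [cliqueNum]
  refine le_antisymm (csSup_le ⟨0, ∅, isNClique_empty.mpr rfl⟩ hub) ?_
  exact le_csSup ⟨n, hub⟩ ⟨_, hclique⟩
end
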